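/- There is a language that is context-free but not counter: the language { w · w^R : w ∈ {a, b, c}* } of even-length palindromes over a three-letter alphabet (where w^R denotes the reversal of w) is context-free, but it is not k-counter for any k ≥ 1. -/

import Mathlib

/-- A `ℤ^k`-automaton over alphabet `A`: a finite directed graph with states
`Fin n`, a start state, accept states, and finitely many edges labelled by
pairs `(x, g)` with `x ∈ A ∪ {ε}` (modelled as `Option A`) and `g ∈ ℤ^k`. -/
structure ZkAut (A : Type) (k : ℕ) where
  n : ℕ
  start : Fin n
  accept : Fin n → Prop
  edges : List (Fin n × (Option A × (Fin k → ℤ)) × Fin n)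

/-- `M.Path p q w g` : there is a directed path from `p` to `q` whose edge
labels read the word `w` and sum to `g` in `ℤ^k`. -/
inductive ZkAut.Path {A : Type} {k : ℕ} (M : ZkAut A k) :
    Fin M.n → Fin M.n → List A → (Fin k → ℤ) → Prop
  | nil (q : Fin M.n) : ZkAut.Path M q q [] 0
  | cons {p q r : Fin M.n} {x : Option A} {g : Fin k → ℤ} {w : List A} {h : Fin k → ℤ} :
      (p, (x, g), q) ∈ M.edges → ZkAut.Path M q r w h →
      ZkAut.Path M p r (x.toList ++ w) (g + h)

/-- The automaton accepts `w` if some path from the start state to an accept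
state reads `w` with total counter value `0 ∈ ℤ^k`. -/
def ZkAut.Accepts {A : Type} {k : ℕ} (M : ZkAut A k) (w : List A) : Prop :=
  ∃ q : Fin M.n, M.accept q ∧ M.Path M.start q w 0

/-- A language is `k`-counter if it is the set of words accepted by some
`ℤ^k`-automaton. -/
def IsCounterLang {A : Type} (k : ℕ) (L : Language A) : Prop :=
  ∃ M : ZkAut A k, ∀ w : List A, w ∈ L ↔ M.Accepts w

/-- The language of even-length palindromes `{ w ++ w^R }` over the
three-letter alphabet `Fin 3` is context-free but not `k`-counter for any
`k ≥ 1`. -/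

def palRule (a : Fin 3) : ContextFreeRule (Fin 3) Unit :=
  ⟨(), [Symbol.terminal a, Symbol.nonterminal (), Symbol.terminal a]⟩

def epsRule : ContextFreeRule (Fin 3) Unit := ⟨(), []⟩

instance : DecidableEq (ContextFreeRule (Fin 3) Unit) := fun r s =>
  decidable_of_iff (r.input = s.input ∧ r.output = s.output)
    ⟨fun ⟨h1, h2⟩ => ContextFreeRule.ext h1 h2, fun h => by subst h; exact ⟨rfl, rfl⟩⟩

abbrev palGrammar : ContextFreeGrammar (Fin 3) :=
  ⟨Unit, (), {epsRule, palRule 0, palRule 1, palRule 2}⟩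

lemma mem_palGrammar_rules {r : ContextFreeRule (Fin 3) Unit} :
    r ∈ palGrammar.rules ↔ r = epsRule ∨ ∃ a, r = palRule a := by
  show r ∈ ({epsRule, palRule 0, palRule 1, palRule 2} : Finset _) ↔ _
  simp only [Finset.mem_insert, Finset.mem_singleton]
  constructor
  · rintro (h | h | h | h)
    · exact Or.inl h
    · exact Or.inr ⟨0, h⟩
    · exact Or.inr ⟨1, h⟩
    · exact Or.inr ⟨2, h⟩
  · rintro (h | ⟨a, rfl⟩)
    · exact Or.inl h
    · fin_cases a
      · exact Or.inr (Or.inl rfl)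
      · exact Or.inr (Or.inr (Or.inl rfl))
      · exact Or.inr (Or.inr (Or.inr rfl))

lemma derives_pal (v : List (Fin 3)) :
    palGrammar.Derives [Symbol.nonterminal ()]
      (List.map Symbol.terminal (v ++ v.reverse)) := by
  induction v with
  | nil =>
    refine Relation.ReflTransGen.single ⟨epsRule, ?_, ?_⟩
    · rw [mem_palGrammar_rules]; exact Or.inl rfl
    · exact ContextFreeRule.Rewrites.input_output (r := epsRule)
  | cons a v ih =>
    have hstep : palGrammar.Produces [Symbol.nonterminal ()] (palRule a).output := by
      refine ⟨palRule a, ?_, ContextFreeRule.Rewrites.input_output⟩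
      rw [mem_palGrammar_rules]; exact Or.inr ⟨a, rfl⟩
    have h1 := (ih.append_left [Symbol.terminal a]).append_right [Symbol.terminal a]
    refine Relation.ReflTransGen.head hstep ?_
    have he : List.map (Symbol.terminal : Fin 3 → Symbol (Fin 3) Unit)
          ((a :: v) ++ (a :: v).reverse)
        = [Symbol.terminal a] ++ List.map Symbol.terminal (v ++ v.reverse)
          ++ [Symbol.terminal a] := by simp
    rw [he]
    exact h1

lemma eq_parts : ∀ (p x q y : List (Symbol (Fin 3) Unit)),
    (∀ s ∈ x, ∃ t, s = Symbol.terminal t) → (∀ s ∈ y, ∃ t, s = Symbol.terminal t) →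
    p ++ [Symbol.nonterminal ()] ++ q = x ++ [Symbol.nonterminal ()] ++ y →
    p = x ∧ q = y := by
  intro p
  induction p with
  | nil =>
    intro x q y hx hy h
    cases x with
    | nil => simpa using h
    | cons s x' =>
      exfalso
      simp only [List.nil_append, List.cons_append, List.cons.injEq] at h
      obtain ⟨t, ht⟩ := hx s (by simp)
      rw [ht] at h
      exact nomatch h.1
  | cons s p' ih =>
    intro x q y hx hy h
    cases x with
    | nil =>
      exfalso
      simp only [List.nil_append, List.cons_append, List.cons.injEq] at h
      have hmem : Symbol.nonterminal () ∈ p' ++ [Symbol.nonterminal ()] ++ q := by simp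
      rw [h.2] at hmem
      obtain ⟨t, ht⟩ := hy _ hmem
      exact nomatch ht
    | cons s' x' =>
      simp only [List.cons_append, List.cons.injEq] at h
      obtain ⟨h1, h2⟩ := h
      obtain ⟨hp, hq⟩ := ih x' q y (fun a ha => hx a (by simp [ha])) hy h2
      exact ⟨by rw [h1, hp], hq⟩

lemma derives_inv (s : List (Symbol (Fin 3) Unit))
    (h : palGrammar.Derives [Symbol.nonterminal ()] s) :
    (∃ u : List (Fin 3), s = List.map Symbol.terminal u ++ [Symbol.nonterminal ()]
        ++ List.map Symbol.terminal u.reverse) ∨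
    (∃ u : List (Fin 3), s = List.map Symbol.terminal (u ++ u.reverse)) := by
  induction h with
  | refl => exact Or.inl ⟨[], by simp⟩
  | tail _ hprod ih =>
    rename_i b c _
    obtain ⟨r, hr, hrw⟩ := hprod
    obtain ⟨pp, qq, hb, hc⟩ := hrw.exists_parts
    rcases ih with ⟨u, hu⟩ | ⟨u, hu⟩
    · -- b has exactly one nonterminal
      rw [hu] at hb
      obtain ⟨hp, hq⟩ := eq_parts _ _ _ _ (by simp) (by simp) hb.symm
      subst hp hq
      rw [mem_palGrammar_rules] at hr
      rcases hr with rfl | ⟨a, rfl⟩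
      · right
        exact ⟨u, by simp [hc, epsRule]⟩
      · left
        refine ⟨u ++ [a], ?_⟩
        rw [hc]
        simp [palRule]
    · -- b is all terminals: impossible
      exfalso
      rw [hu] at hb
      have : Symbol.nonterminal r.input
          ∈ List.map (Symbol.terminal : Fin 3 → Symbol (Fin 3) Unit) (u ++ u.reverse) := by
        rw [hb]; simp
      simp only [List.mem_map] at this
      obtain ⟨t, _, ht⟩ := this
      exact nomatch ht

lemma palGrammar_language :
    palGrammar.language = {w : List (Fin 3) | ∃ v : List (Fin 3), w = v ++ v.reverse} := by
  ext w
  rw [ContextFreeGrammar.mem_language_iff]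
  constructor
  · intro h
    rcases derives_inv _ h with ⟨u, hu⟩ | ⟨u, hu⟩
    · exfalso
      have : Symbol.nonterminal () ∈ List.map
          (Symbol.terminal : Fin 3 → Symbol (Fin 3) Unit) w := by
        rw [hu]; simp
      simp only [List.mem_map] at this
      obtain ⟨t, _, ht⟩ := this
      exact nomatch ht
    · have : w = u ++ u.reverse := by
        have hinj : Function.Injective (Symbol.terminal : Fin 3 → Symbol (Fin 3) Unit) :=
          fun a b hab => by cases hab; rfl
        exact List.map_injective_iff.mpr hinj hu
      exact ⟨u, this⟩
  · rintro ⟨v, rfl⟩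
    exact derives_pal v

namespace CounterAux

variable {A : Type} {k : ℕ} (M : ZkAut A k)

abbrev Edge (M : ZkAut A k) := Fin M.n × (Option A × (Fin k → ℤ)) × Fin M.n

def wordOf : List (Edge M) → List A
  | [] => []
  | e :: l => e.2.1.1.toList ++ wordOf l

def sumOf : List (Edge M) → (Fin k → ℤ)
  | [] => 0
  | e :: l => e.2.1.2 + sumOf l

def IsWalk : Fin M.n → List (Edge M) → Fin M.n → Prop
  | p, [], q => p = q
  | p, e :: l, q => e ∈ M.edges ∧ e.1 = p ∧ IsWalk e.2.2 l q

def statesOf (p : Fin M.n) (l : List (Edge M)) : List (Fin M.n) :=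
  p :: l.map (fun e => e.2.2)

variable {M}

@[simp] lemma wordOf_nil : wordOf M [] = [] := rfl
@[simp] lemma wordOf_cons (e : Edge M) (l) :
    wordOf M (e :: l) = e.2.1.1.toList ++ wordOf M l := rfl
@[simp] lemma sumOf_nil : sumOf M [] = 0 := rfl
@[simp] lemma sumOf_cons (e : Edge M) (l) : sumOf M (e :: l) = e.2.1.2 + sumOf M l := rfl

@[simp] lemma wordOf_append (l₁ l₂ : List (Edge M)) :
    wordOf M (l₁ ++ l₂) = wordOf M l₁ ++ wordOf M l₂ := by
  induction l₁ with
  | nil => simp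
  | cons e l ih => simp [ih]

@[simp] lemma sumOf_append (l₁ l₂ : List (Edge M)) :
    sumOf M (l₁ ++ l₂) = sumOf M l₁ + sumOf M l₂ := by
  induction l₁ with
  | nil => simp
  | cons e l ih => simp [ih]; abel

lemma isWalk_append {p m q : Fin M.n} {l₁ l₂ : List (Edge M)}
    (h₁ : IsWalk M p l₁ m) (h₂ : IsWalk M m l₂ q) : IsWalk M p (l₁ ++ l₂) q := by
  induction l₁ generalizing p with
  | nil => cases h₁; simpa using h₂
  | cons e l ih => exact ⟨h₁.1, h₁.2.1, ih h₁.2.2⟩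

lemma isWalk_append_split {p q : Fin M.n} {l₁ l₂ : List (Edge M)}
    (h : IsWalk M p (l₁ ++ l₂) q) : ∃ m, IsWalk M p l₁ m ∧ IsWalk M m l₂ q := by
  induction l₁ generalizing p with
  | nil => exact ⟨p, rfl, h⟩
  | cons e l ih =>
    obtain ⟨m, h1, h2⟩ := ih h.2.2
    exact ⟨m, ⟨h.1, h.2.1, h1⟩, h2⟩

lemma path_iff_walk {p q : Fin M.n} {w : List A} {g : Fin k → ℤ} :
    M.Path p q w g ↔ ∃ l, IsWalk M p l q ∧ wordOf M l = w ∧ sumOf M l = g := by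
  constructor
  · intro h
    induction h with
    | nil q => exact ⟨[], rfl, rfl, rfl⟩
    | cons he _ ih =>
      rename_i p' q' r' x' g' w' h' _
      obtain ⟨l, hl, hw, hs⟩ := ih
      exact ⟨(p', (x', g'), q') :: l, ⟨he, rfl, hl⟩, by simp [hw], by simp [hs]⟩
  · rintro ⟨l, hl, rfl, rfl⟩
    induction l generalizing p with
    | nil => obtain rfl : p = q := hl; exact ZkAut.Path.nil p
    | cons e l ih =>
      obtain ⟨he, rfl, hl'⟩ := hl
      exact ZkAut.Path.cons (by exact he) (ih hl')

lemma word_split {l : List (Edge M)} {w v : List A} (h : wordOf M l = w ++ v) :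
    ∃ l₁ l₂, l = l₁ ++ l₂ ∧ wordOf M l₁ = w ∧ wordOf M l₂ = v := by
  induction l generalizing w with
  | nil =>
    have : w = [] ∧ v = [] := by
      constructor <;> [skip; skip] <;>
        · have := h.symm
          cases w <;> simp_all
    exact ⟨[], [], by simp, by simp [this.1], by simp [this.2]⟩
  | cons e l ih =>
    cases w with
    | nil => exact ⟨[], e :: l, by simp, rfl, by simpa using h⟩
    | cons a w' =>
      rcases hx : e.2.1.1 with _ | b
      · rw [wordOf_cons, hx] at h
        simp only [Option.toList_none, List.nil_append] at h
        obtain ⟨l₁, l₂, rfl, hw1, hw2⟩ := ih h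
        exact ⟨e :: l₁, l₂, by simp, by simp [hx, hw1], hw2⟩
      · rw [wordOf_cons, hx] at h
        simp only [Option.toList_some, List.cons_append, List.singleton_append,
          List.cons.injEq] at h
        obtain ⟨rfl, h2⟩ := h
        obtain ⟨l₁, l₂, rfl, hw1, hw2⟩ := ih h2
        exact ⟨e :: l₁, l₂, by simp, by simp [hx, hw1], hw2⟩

lemma mem_statesOf_append {p : Fin M.n} {l₁ l₂ : List (Edge M)} {s : Fin M.n} :
    s ∈ statesOf M p (l₁ ++ l₂) ↔ s ∈ statesOf M p l₁ ∨ s ∈ l₂.map (fun e => e.2.2) := by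
  simp [statesOf, or_assoc]

lemma end_mem_statesOf {p q : Fin M.n} {l : List (Edge M)} (h : IsWalk M p l q) :
    q ∈ statesOf M p l := by
  induction l generalizing p with
  | nil => cases h; simp [statesOf]
  | cons e l ih =>
    obtain ⟨_, _, h3⟩ := h
    have := ih h3
    simp only [statesOf, List.mem_cons] at this ⊢
    tauto

lemma mem_statesOf_of_mem_right {p m : Fin M.n} {l₁ l₂ : List (Edge M)} {s : Fin M.n}
    (h₁ : IsWalk M p l₁ m) (hs : s ∈ statesOf M m l₂) : s ∈ statesOf M p (l₁ ++ l₂) := by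
  rw [mem_statesOf_append]
  rcases List.mem_cons.mp hs with rfl | h
  · exact Or.inl (end_mem_statesOf h₁)
  · exact Or.inr h

lemma mem_statesOf_of_mem_left {p : Fin M.n} {l₁ l₂ : List (Edge M)} {s : Fin M.n}
    (hs : s ∈ statesOf M p l₁) : s ∈ statesOf M p (l₁ ++ l₂) :=
  mem_statesOf_append.mpr (Or.inl hs)

lemma walk_split_at_state {p q s : Fin M.n} {l : List (Edge M)}
    (h : IsWalk M p l q) (hs : s ∈ statesOf M p l) :
    ∃ l₁ l₂, l = l₁ ++ l₂ ∧ IsWalk M p l₁ s ∧ IsWalk M s l₂ q := by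
  induction l generalizing p with
  | nil =>
    obtain rfl : p = q := h
    have hsp : s = p := by simpa [statesOf] using hs
    exact ⟨[], [], by simp, hsp.symm, hsp⟩
  | cons e l ih =>
    rcases List.mem_cons.mp hs with rfl | hs'
    · exact ⟨[], e :: l, by simp, rfl, h⟩
    · obtain ⟨he, hep, hw⟩ := h
      obtain ⟨l₁, l₂, rfl, h1, h2⟩ := ih hw hs'
      exact ⟨e :: l₁, l₂, by simp, ⟨he, hep, h1⟩, h2⟩

def Vcycles (M : ZkAut A k) (S : Set (Fin M.n)) : AddSubmonoid (Fin k → ℤ) :=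
  AddSubmonoid.closure
    {c | ∃ s ∈ S, ∃ l, IsWalk M s l s ∧ wordOf M l = [] ∧ sumOf M l = c}

lemma Vcycles_mono {S T : Set (Fin M.n)} (h : S ⊆ T) : Vcycles M S ≤ Vcycles M T := by
  apply AddSubmonoid.closure_mono
  rintro c ⟨s, hs, l, h1, h2, h3⟩
  exact ⟨s, h hs, l, h1, h2, h3⟩

lemma Vcycles_union_split {S T : Set (Fin M.n)} {v : Fin k → ℤ}
    (hv : v ∈ Vcycles M (S ∪ T)) :
    ∃ v₁ ∈ Vcycles M S, ∃ v₂ ∈ Vcycles M T, v = v₁ + v₂ := by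
  induction hv using AddSubmonoid.closure_induction with
  | mem c hc =>
    obtain ⟨s, hs | hs, hcyc⟩ := hc
    · exact ⟨c, AddSubmonoid.subset_closure ⟨s, hs, hcyc⟩, 0, zero_mem _, by simp⟩
    · exact ⟨0, zero_mem _, c, AddSubmonoid.subset_closure ⟨s, hs, hcyc⟩, by simp⟩
  | zero => exact ⟨0, zero_mem _, 0, zero_mem _, by simp⟩
  | add x y hx hy ihx ihy =>
    obtain ⟨a, ha, b, hb, rfl⟩ := ihx
    obtain ⟨a', ha', b', hb', rfl⟩ := ihy
    exact ⟨a + a', add_mem ha ha', b + b', add_mem hb hb', by abel⟩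

lemma insert_cycles {S : Set (Fin M.n)} {v : Fin k → ℤ} (hv : v ∈ Vcycles M S) :
    ∀ p q (l : List (Edge M)), IsWalk M p l q → (∀ s ∈ S, s ∈ statesOf M p l) →
    ∃ l', IsWalk M p l' q ∧ wordOf M l' = wordOf M l ∧ sumOf M l' = sumOf M l + v ∧
      ∀ s, s ∈ statesOf M p l → s ∈ statesOf M p l' := by
  induction hv using AddSubmonoid.closure_induction with
  | mem c hc =>
    intro p q l hl hS
    obtain ⟨s, hs, lc, hc1, hc2, hc3⟩ := hc
    obtain ⟨l₁, l₂, rfl, h1, h2⟩ := walk_split_at_state hl (hS s hs)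
    refine ⟨l₁ ++ lc ++ l₂, ?_, ?_, ?_, ?_⟩
    · exact isWalk_append (isWalk_append h1 hc1) h2
    · simp [hc2]
    · simp [hc3]; abel
    · intro t ht
      rcases mem_statesOf_append.mp ht with h | h
      · exact mem_statesOf_of_mem_left (mem_statesOf_of_mem_left h)
      · rw [List.append_assoc]
        exact mem_statesOf_append.mpr (Or.inr (by simp [h]))
  | zero =>
    intro p q l hl hS
    exact ⟨l, hl, rfl, by simp, fun s h => h⟩
  | add x y hx hy ihx ihy =>
    intro p q l hl hS
    obtain ⟨l', hw', hword', hsum', hst'⟩ := ihx p q l hl hS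
    obtain ⟨l'', hw'', hword'', hsum'', hst''⟩ := ihy p q l' hw' (fun s hs => hst' s (hS s hs))
    refine ⟨l'', hw'', by rw [hword'', hword'], ?_, fun s h => hst'' s (hst' s h)⟩
    rw [hsum'', hsum']; abel

lemma eps_reduce : ∀ (l : List (Edge M)) (p q : Fin M.n), IsWalk M p l q → wordOf M l = [] →
    ∃ l0, IsWalk M p l0 q ∧ wordOf M l0 = [] ∧ (statesOf M p l0).Nodup ∧
      ∃ v ∈ Vcycles M {s | s ∈ statesOf M p l0}, sumOf M l = sumOf M l0 + v := by
  intro l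
  induction l with
  | nil =>
    intro p q h _
    exact ⟨[], h, rfl, by simp [statesOf], 0, zero_mem _, by simp⟩
  | cons e l ih =>
    intro p q h hw
    obtain ⟨he, hep, hwalk⟩ := h
    have hx : e.2.1.1 = none := by
      rcases h' : e.2.1.1 with _ | b
      · rfl
      · rw [wordOf_cons, h'] at hw; simp at hw
    have hwl : wordOf M l = [] := by rw [wordOf_cons, hx] at hw; simpa using hw
    obtain ⟨l0, hl0, hw0, hnd0, v', hv', hs0⟩ := ih e.2.2 q hwalk hwl
    by_cases hp : p ∈ statesOf M e.2.2 l0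
    · -- split l0 at p, fold prefix into a cycle at p
      obtain ⟨l₁, l₂, rfl, h1, h2⟩ := walk_split_at_state hl0 hp
      have hsplitw : wordOf M l₁ = [] ∧ wordOf M l₂ = [] := by
        rw [wordOf_append] at hw0
        exact List.append_eq_nil_iff.mp hw0
      -- split v' into parts rooted on l₁ resp. l₂
      have hsub : {s | s ∈ statesOf M e.2.2 (l₁ ++ l₂)} ⊆
          {s | s ∈ statesOf M e.2.2 l₁} ∪ {s | s ∈ statesOf M p l₂} := by
        intro s hs
        rcases mem_statesOf_append.mp hs with h | h
        · exact Or.inl h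
        · exact Or.inr (show s ∈ statesOf M p l₂ from List.mem_cons_of_mem _ h)
      obtain ⟨v₁, hv₁, v₂, hv₂, rfl⟩ := Vcycles_union_split (Vcycles_mono hsub hv')
      -- build the cycle at p realizing e + l₁ + v₁
      have hcycw : IsWalk M p (e :: l₁) p := ⟨he, hep, h1⟩
      have hRoots : ∀ s ∈ {s | s ∈ statesOf M e.2.2 l₁}, s ∈ statesOf M p (e :: l₁) := by
        intro s hs
        simp only [statesOf, List.map_cons, List.mem_cons] at hs ⊢
        tauto
      obtain ⟨lc, hlc, hlcw, hlcs, _⟩ := insert_cycles hv₁ p p (e :: l₁) hcycw hRoots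
      have hcmem : sumOf M (e :: l₁) + v₁ ∈ Vcycles M {s | s ∈ statesOf M p l₂} := by
        apply AddSubmonoid.subset_closure
        refine ⟨p, by simp [statesOf], lc, hlc, ?_, hlcs⟩
        rw [hlcw]; simp [hsplitw.1, hx]
      refine ⟨l₂, h2, hsplitw.2, ?_, (sumOf M (e :: l₁) + v₁) + v₂,
        add_mem hcmem (Vcycles_mono (by intro s hs; simp [statesOf] at hs ⊢; tauto) hv₂), ?_⟩
      · -- Nodup for statesOf p l₂
        have hnd : (statesOf M e.2.2 (l₁ ++ l₂)).Nodup := hnd0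
        have : statesOf M e.2.2 (l₁ ++ l₂)
            = statesOf M e.2.2 l₁ ++ l₂.map (fun e => e.2.2) := by
          simp [statesOf]
        rw [this] at hnd
        have hnd2 := hnd.of_append_right
        have hdisj := List.disjoint_of_nodup_append hnd
        have hpl : p ∈ statesOf M e.2.2 l₁ := end_mem_statesOf h1
        have hpn : p ∉ l₂.map (fun e => e.2.2) := fun hmem => hdisj hpl hmem
        exact List.nodup_cons.mpr ⟨hpn, hnd2⟩
      · have : sumOf M (e :: l) = e.2.1.2 + sumOf M l := by simp
        rw [this, hs0]
        simp only [sumOf_append, sumOf_cons]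
        abel
    · -- prepend e
      refine ⟨e :: l0, ⟨he, hep, hl0⟩, by simp [hx, hw0], ?_, v', ?_, ?_⟩
      · exact List.nodup_cons.mpr ⟨hp, hnd0⟩
      · refine Vcycles_mono ?_ hv'
        intro s hs
        simp only [statesOf, Set.mem_setOf_eq, List.map_cons, List.mem_cons] at hs ⊢
        tauto
      · simp only [sumOf_cons, hs0]; abel

lemma first_letter {l : List (Edge M)} {a : A} {ws : List A}
    (hw : wordOf M l = a :: ws) :
    ∃ l₁ e l₂, l = l₁ ++ e :: l₂ ∧ wordOf M l₁ = [] ∧ (e : Edge M).2.1.1 = some a ∧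
      wordOf M l₂ = ws := by
  induction l with
  | nil => simp at hw
  | cons e l ih =>
    rcases hx : e.2.1.1 with _ | b
    · rw [wordOf_cons, hx] at hw
      simp only [Option.toList_none, List.nil_append] at hw
      obtain ⟨l₁, e', l₂, rfl, h1, h2, h3⟩ := ih hw
      exact ⟨e :: l₁, e', l₂, by simp, by simp [hx, h1], h2, h3⟩
    · rw [wordOf_cons, hx] at hw
      simp only [Option.toList_some, List.singleton_append, List.cons.injEq] at hw
      exact ⟨[], e, l, by simp, rfl, by rw [hx, hw.1], hw.2⟩

lemma reduce : ∀ (w : List A) (l : List (Edge M)) (p q : Fin M.n),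
    IsWalk M p l q → wordOf M l = w →
    ∃ l0, IsWalk M p l0 q ∧ wordOf M l0 = w ∧ l0.length ≤ (w.length + 1) * M.n ∧
      ∃ v ∈ Vcycles M {s | s ∈ statesOf M p l0}, sumOf M l = sumOf M l0 + v := by
  intro w
  induction w with
  | nil =>
    intro l p q hl hw
    obtain ⟨l0, h1, h2, h3, v, hv, h5⟩ := eps_reduce l p q hl hw
    refine ⟨l0, h1, h2, ?_, v, hv, h5⟩
    have hlen := h3.length_le_card
    simp only [statesOf, List.length_cons, List.length_map, Fintype.card_fin] at hlen
    simp only [List.length_nil]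
    omega
  | cons a ws ih =>
    intro l p q hl hw
    obtain ⟨l₁, e, l₂, rfl, hw1, hxa, hw2⟩ := first_letter hw
    obtain ⟨m, hm1, hm2⟩ := isWalk_append_split hl
    obtain ⟨he, hem, hwalk2⟩ := hm2
    obtain ⟨l₁0, g1, g2, g3, v₁, hv₁, g5⟩ := eps_reduce l₁ p m hm1 hw1
    obtain ⟨l₂0, f1, f2, f3, v₂, hv₂, f5⟩ := ih l₂ e.2.2 q hwalk2 hw2
    refine ⟨l₁0 ++ e :: l₂0, isWalk_append g1 ⟨he, hem, f1⟩, ?_, ?_, v₁ + v₂, ?_, ?_⟩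
    · simp [g2, f2, hxa]
    · have hlen1 : l₁0.length + 1 ≤ M.n := by
        have := g3.length_le_card
        simp only [statesOf, List.length_cons, List.length_map, Fintype.card_fin] at this
        omega
      have : (l₁0 ++ e :: l₂0).length = l₁0.length + 1 + l₂0.length := by
        simp; omega
      rw [this]
      have hexp : ((a :: ws).length + 1) * M.n = M.n + (ws.length + 1) * M.n := by
        simp [List.length_cons]; ring
      omega
    · apply add_mem
      · refine Vcycles_mono ?_ hv₁
        intro s hs
        exact mem_statesOf_of_mem_left hs
      · refine Vcycles_mono ?_ hv₂
        intro s hs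
        simp only [Set.mem_setOf_eq] at hs ⊢
        rcases List.mem_cons.mp hs with rfl | hs'
        · exact mem_statesOf_of_mem_right g1 (by simp [statesOf])
        · exact mem_statesOf_append.mpr (Or.inr (by simpa using Or.inr hs'))
    · rw [sumOf_append, sumOf_cons, sumOf_append, sumOf_cons, g5, f5]
      abel

lemma sum_bound (C : ℕ) (hC : ∀ e ∈ M.edges, ∀ i, (e.2.1.2 i).natAbs ≤ C) :
    ∀ (l : List (Edge M)) (p q : Fin M.n), IsWalk M p l q →
      ∀ i, (sumOf M l i).natAbs ≤ l.length * C := by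
  intro l
  induction l with
  | nil => intro p q _ i; simp
  | cons e l ih =>
    intro p q h i
    obtain ⟨he, _, hwalk⟩ := h
    have h1 := hC e he i
    have h2 := ih e.2.2 q hwalk i
    have h3 : (sumOf M (e :: l) i) = e.2.1.2 i + sumOf M l i := by simp
    have h4 := Int.natAbs_add_le (e.2.1.2 i) (sumOf M l i)
    rw [h3]
    calc (e.2.1.2 i + sumOf M l i).natAbs ≤ (e.2.1.2 i).natAbs + (sumOf M l i).natAbs := h4
      _ ≤ C + l.length * C := Nat.add_le_add h1 h2
      _ = (e :: l).length * C := by simp [Nat.succ_mul]; ring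

def Cbound (M : ZkAut A k) : ℕ :=
  (M.edges.map (fun e => ∑ i, (e.2.1.2 i).natAbs)).sum

lemma le_Cbound {e : Edge M} (he : e ∈ M.edges) (i : Fin k) :
    (e.2.1.2 i).natAbs ≤ Cbound M := by
  have h1 : (e.2.1.2 i).natAbs ≤ ∑ j, (e.2.1.2 j).natAbs :=
    Finset.single_le_sum (f := fun j => (e.2.1.2 j).natAbs)
      (fun j _ => Nat.zero_le _) (Finset.mem_univ i)
  have h2 : (∑ j, (e.2.1.2 j).natAbs) ≤ Cbound M :=
    List.le_sum_of_mem
      (List.mem_map_of_mem he)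
  omega

lemma exists_big (K t : ℕ) : ∃ m : ℕ, 0 < m ∧ K * (m + 1) ^ t < 3 ^ m := by
  have h := isLittleO_pow_const_const_pow_of_one_lt (R := ℝ) t (show (1:ℝ) < 3 by norm_num)
  rw [Asymptotics.isLittleO_iff] at h
  have hD : (0:ℝ) < ((K:ℝ) + 1) * 2 ^ t := by positivity
  have hc : (0:ℝ) < 1 / (((K:ℝ) + 1) * 2 ^ t) := by positivity
  obtain ⟨N, hN⟩ := Filter.eventually_atTop.mp (h hc)
  refine ⟨max N 1, lt_of_lt_of_le one_pos (le_max_right N 1), ?_⟩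
  set m := max N 1 with hm
  have hm1 : 1 ≤ m := le_max_right N 1
  have h1 := hN m (le_max_left _ _)
  rw [Real.norm_eq_abs, Real.norm_eq_abs, abs_of_nonneg (by positivity),
    abs_of_nonneg (by positivity)] at h1
  have h2 : ((K:ℝ) + 1) * 2 ^ t * (m:ℝ) ^ t ≤ 3 ^ m := by
    have := mul_le_mul_of_nonneg_left h1 (le_of_lt hD)
    calc ((K:ℝ) + 1) * 2 ^ t * (m:ℝ) ^ t ≤ (((K:ℝ) + 1) * 2 ^ t) *
          (1 / (((K:ℝ) + 1) * 2 ^ t) * 3 ^ m) := this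
      _ = 3 ^ m := by field_simp
  have hmR : (1:ℝ) ≤ (m:ℝ) := by exact_mod_cast hm1
  have hb : ((m:ℝ) + 1) ^ t ≤ (2 * m) ^ t :=
    pow_le_pow_left₀ (by positivity) (by linarith) t
  have h3 : (K:ℝ) * ((m:ℝ) + 1) ^ t < 3 ^ m := by
    have e1 : ((2:ℝ) * m) ^ t = 2 ^ t * (m:ℝ) ^ t := by rw [mul_pow]
    have hpos : (0:ℝ) < 2 ^ t * (m:ℝ) ^ t := by positivity
    calc (K:ℝ) * ((m:ℝ) + 1) ^ t ≤ (K:ℝ) * (2 ^ t * (m:ℝ) ^ t) := by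
          rw [← e1]; exact mul_le_mul_of_nonneg_left hb (by positivity)
      _ < ((K:ℝ) + 1) * (2 ^ t * (m:ℝ) ^ t) := by nlinarith
      _ = ((K:ℝ) + 1) * 2 ^ t * (m:ℝ) ^ t := by ring
      _ ≤ 3 ^ m := h2
  have : ((K * (m + 1) ^ t : ℕ) : ℝ) < ((3 ^ m : ℕ) : ℝ) := by push_cast; exact h3
  exact_mod_cast this

def GoodData (M : ZkAut (Fin 3) k) (B : ℕ) (wl : List (Fin 3))
    (d : Fin M.n × Finset (Fin M.n) × Finset (Fin M.n) ×
      (Fin k → (Finset.Icc (-(B:ℤ)) (B:ℤ))) × (Fin k → (Finset.Icc (-(B:ℤ)) (B:ℤ)))) :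
    Prop :=
  ∃ f lα lβ, M.accept f ∧ IsWalk M M.start lα d.1 ∧ wordOf M lα = wl ∧
    IsWalk M d.1 lβ f ∧ wordOf M lβ = wl.reverse ∧
    d.2.2.1 = (statesOf M d.1 lβ).toFinset ∧
    (∀ i, (d.2.2.2.2 i : ℤ) = sumOf M lβ i) ∧
    ∃ v ∈ Vcycles M ({s | s ∈ statesOf M M.start lα} ∪ {s | s ∈ statesOf M d.1 lβ}),
      sumOf M lα + sumOf M lβ + v = 0

lemma exists_gooddata (M : ZkAut (Fin 3) k)
    (hM : ∀ w : List (Fin 3), (∃ v : List (Fin 3), w = v ++ v.reverse) ↔ M.Accepts w)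
    (m : ℕ) (wl : List (Fin 3)) (hlen : wl.length = m) :
    ∃ d, GoodData M ((m + 1) * M.n * Cbound M) wl d := by
  set B := (m + 1) * M.n * Cbound M with hB
  have hacc : M.Accepts (wl ++ wl.reverse) := (hM _).mp ⟨wl, rfl⟩
  obtain ⟨f, hf, hpath⟩ := hacc
  obtain ⟨l, hwalk, hword, hsum⟩ := path_iff_walk.mp hpath
  obtain ⟨la, lb, rfl, hwa, hwb⟩ := word_split hword
  obtain ⟨qm, hwalka, hwalkb⟩ := isWalk_append_split hwalk
  obtain ⟨lα, hα1, hα2, hα3, vα, hvα, hα5⟩ := reduce wl la M.start qm hwalka hwa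
  obtain ⟨lβ, hβ1, hβ2, hβ3, vβ, hvβ, hβ5⟩ :=
    reduce wl.reverse lb qm f hwalkb hwb
  have hsum0 : sumOf M la + sumOf M lb = 0 := by
    rw [← sumOf_append]; exact hsum
  have hival : ∀ i, (sumOf M lα i).natAbs ≤ B := by
    intro i
    calc (sumOf M lα i).natAbs ≤ lα.length * Cbound M :=
          sum_bound (Cbound M) (fun e he j => le_Cbound he j) lα M.start qm hα1 i
      _ ≤ ((wl.length + 1) * M.n) * Cbound M := Nat.mul_le_mul_right _ hα3
      _ = B := by rw [hB, hlen]
  have hival' : ∀ i, (sumOf M lβ i).natAbs ≤ B := by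
    intro i
    calc (sumOf M lβ i).natAbs ≤ lβ.length * Cbound M :=
          sum_bound (Cbound M) (fun e he j => le_Cbound he j) lβ qm f hβ1 i
      _ ≤ ((wl.reverse.length + 1) * M.n) * Cbound M := Nat.mul_le_mul_right _ hβ3
      _ = B := by rw [hB, List.length_reverse, hlen]
  refine ⟨⟨qm, (statesOf M M.start lα).toFinset, (statesOf M qm lβ).toFinset,
    fun i => ⟨sumOf M lα i, ?_⟩, fun i => ⟨sumOf M lβ i, ?_⟩⟩,
    f, lα, lβ, hf, hα1, hα2, hβ1, hβ2, rfl, fun i => rfl, vα + vβ, ?_, ?_⟩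
  · rw [Finset.mem_Icc]
    have := hival i
    omega
  · rw [Finset.mem_Icc]
    have := hival' i
    omega
  · apply add_mem
    · exact Vcycles_mono (fun s hs => Or.inl hs) hvα
    · exact Vcycles_mono (fun s hs => Or.inr hs) hvβ
  · have h1 : sumOf M la = sumOf M lα + vα := hα5
    have h2 : sumOf M lb = sumOf M lβ + vβ := hβ5
    have := hsum0
    rw [h1, h2] at this
    calc sumOf M lα + sumOf M lβ + (vα + vβ)
        = sumOf M lα + vα + (sumOf M lβ + vβ) := by abel
      _ = 0 := this

lemma gooddata_unique (M : ZkAut (Fin 3) k)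
    (hM : ∀ w : List (Fin 3), (∃ v : List (Fin 3), w = v ++ v.reverse) ↔ M.Accepts w)
    (m B : ℕ) (wl wl' : List (Fin 3)) (hlen : wl.length = m) (hlen' : wl'.length = m)
    {d} (hd : GoodData M B wl d) (hd' : GoodData M B wl' d) : wl = wl' := by
  obtain ⟨f, lα, lβ, hf, h1, h2, h3, h4, h5, h6, v, hv, hveq⟩ := hd
  obtain ⟨f', lα', lβ', hf', h1', h2', h3', h4', h5', h6', v', hv', hveq'⟩ := hd'
  -- the two β-walks have the same state set and the same sum
  have hstates : ∀ s, s ∈ statesOf M d.1 lβ ↔ s ∈ statesOf M d.1 lβ' := by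
    intro s
    rw [← List.mem_toFinset, ← List.mem_toFinset (l := statesOf M d.1 lβ'), ← h5, ← h5']
  have hsums : sumOf M lβ = sumOf M lβ' := by
    funext i
    rw [← h6 i, ← h6' i]
  -- stitch
  have hstitch : IsWalk M M.start (lα ++ lβ') f' := isWalk_append h1 h3'
  have hvsub : v ∈ Vcycles M {s | s ∈ statesOf M M.start (lα ++ lβ')} := by
    refine Vcycles_mono ?_ hv
    rintro s (hs | hs)
    · exact mem_statesOf_of_mem_left hs
    · exact mem_statesOf_of_mem_right h1 ((hstates s).mp hs)
  obtain ⟨l', hl'1, hl'2, hl'3, _⟩ :=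
    insert_cycles hvsub M.start f' (lα ++ lβ') hstitch (fun s hs => hs)
  have hl'sum : sumOf M l' = 0 := by
    rw [hl'3, sumOf_append, ← hsums]
    exact hveq
  have hl'word : wordOf M l' = wl ++ wl'.reverse := by
    rw [hl'2, wordOf_append, h2, h4']
  have hacc : M.Accepts (wl ++ wl'.reverse) :=
    ⟨f', hf', path_iff_walk.mpr ⟨l', hl'1, hl'word, hl'sum⟩⟩
  obtain ⟨u, hu⟩ := (hM _).mpr hacc
  have hulen : u.length = m := by
    have := congrArg List.length hu
    simp only [List.length_append, List.length_reverse, hlen, hlen'] at this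
    omega
  obtain ⟨e1, e2⟩ := List.append_inj hu (by rw [hlen, hulen])
  rw [e1]
  exact List.reverse_injective e2.symm

theorem not_counter (k : ℕ) :
    ¬ IsCounterLang k {w : List (Fin 3) | ∃ v : List (Fin 3), w = v ++ v.reverse} := by
  classical
  rintro ⟨M, hM⟩
  have hM' : ∀ w : List (Fin 3), (∃ v : List (Fin 3), w = v ++ v.reverse) ↔ M.Accepts w :=
    hM
  obtain ⟨m, hm0, hbig⟩ :=
    exists_big (M.n * 2 ^ M.n * 2 ^ M.n * (2 * (M.n * Cbound M) + 1) ^ (2 * k)) (2 * k)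
  have hinj : Function.Injective (fun w : Fin m → Fin 3 =>
      (exists_gooddata M hM' m (List.ofFn w) (by simp)).choose) := by
    intro w w' hww
    have s1 := (exists_gooddata M hM' m (List.ofFn w) (by simp)).choose_spec
    have s2 := (exists_gooddata M hM' m (List.ofFn w') (by simp)).choose_spec
    simp only at hww
    rw [hww] at s1
    exact List.ofFn_injective
      (gooddata_unique M hM' m _ _ _ (by simp) (by simp) s2 s1).symm
  have hcard := Fintype.card_le_of_injective _ hinj
  have hsrc : Fintype.card (Fin m → Fin 3) = 3 ^ m := by
    simp [Fintype.card_fun]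
  have hIcc : Fintype.card
      (Finset.Icc (-(((m + 1) * M.n * Cbound M : ℕ):ℤ)) (((m + 1) * M.n * Cbound M : ℕ):ℤ))
      = 2 * ((m + 1) * M.n * Cbound M) + 1 := by
    rw [Fintype.card_coe, Int.card_Icc]
    omega
  have hDcard : Fintype.card (Fin M.n × Finset (Fin M.n) × Finset (Fin M.n) ×
      (Fin k → (Finset.Icc (-(((m + 1) * M.n * Cbound M : ℕ):ℤ))
        (((m + 1) * M.n * Cbound M : ℕ):ℤ))) ×
      (Fin k → (Finset.Icc (-(((m + 1) * M.n * Cbound M : ℕ):ℤ))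
        (((m + 1) * M.n * Cbound M : ℕ):ℤ))))
      = M.n * (2 ^ M.n * (2 ^ M.n * ((2 * ((m + 1) * M.n * Cbound M) + 1) ^ k *
          (2 * ((m + 1) * M.n * Cbound M) + 1) ^ k))) := by
    simp only [Fintype.card_prod, Fintype.card_fun, hIcc, Fintype.card_finset, Fintype.card_fin]
  have hBB : 2 * ((m + 1) * M.n * Cbound M) + 1 ≤ (m + 1) * (2 * (M.n * Cbound M) + 1) := by
    have e2 : (m + 1) * (2 * (M.n * Cbound M) + 1)
        = 2 * ((m + 1) * M.n * Cbound M) + (m + 1) := by ring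
    omega
  have hle : M.n * (2 ^ M.n * (2 ^ M.n * ((2 * ((m + 1) * M.n * Cbound M) + 1) ^ k *
          (2 * ((m + 1) * M.n * Cbound M) + 1) ^ k)))
      ≤ M.n * 2 ^ M.n * 2 ^ M.n * (2 * (M.n * Cbound M) + 1) ^ (2 * k)
        * (m + 1) ^ (2 * k) := by
    calc M.n * (2 ^ M.n * (2 ^ M.n * ((2 * ((m + 1) * M.n * Cbound M) + 1) ^ k *
          (2 * ((m + 1) * M.n * Cbound M) + 1) ^ k)))
        = M.n * 2 ^ M.n * 2 ^ M.n * ((2 * ((m + 1) * M.n * Cbound M) + 1) ^ k *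
            (2 * ((m + 1) * M.n * Cbound M) + 1) ^ k) := by ring
      _ ≤ M.n * 2 ^ M.n * 2 ^ M.n * (((m + 1) * (2 * (M.n * Cbound M) + 1)) ^ k *
            ((m + 1) * (2 * (M.n * Cbound M) + 1)) ^ k) := by gcongr
      _ = M.n * 2 ^ M.n * 2 ^ M.n * (2 * (M.n * Cbound M) + 1) ^ (2 * k)
            * (m + 1) ^ (2 * k) := by
          rw [show 2 * k = k + k by omega, pow_add, pow_add, mul_pow]
          ring
  rw [hsrc, hDcard] at hcard
  exact lt_irrefl _ (lt_of_le_of_lt (le_trans hcard hle) hbig)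

end CounterAux

theorem palindromes_context_free_not_counter :
    let L : Language (Fin 3) := {w | ∃ v : List (Fin 3), w = v ++ v.reverse}
    L.IsContextFree ∧ ∀ k : ℕ, 1 ≤ k → ¬ IsCounterLang k L := by
  intro L
  constructor
  · exact ⟨palGrammar, palGrammar_language⟩
  · intro k _
    exact CounterAux.not_counter k
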